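/- Let $u$ be a nonconstant inner function and $\varphi \in L^\infty(\mathbb{T})$ with $\|\varphi\|_\infty = 1$. Suppose there exist inner functions $\psi_+$ and $\chi_+$ such that $\varphi = \bar u\, \bar\psi_+\, \chi_+$ a.e. on $\mathbb{T}$. Then there exists a nonzero $h_0 \in H^2$ such that $f_0 = u h_0 \in uH^2 \subset \mathcal{K}_u^\perp$ satisfies $\|D_\varphi f_0\| = \|f_0\|$ and $\varphi u h_0 \in H^2$; i.e., $D_\varphi$ attains its norm on the analytic component. -/

import Mathlib

set_option synthInstance.maxHeartbeats 1000000
set_option maxHeartbeats 1000000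

open MeasureTheory Complex Submodule

noncomputable section
namespace DTTO

instance fact2pi : Fact (0 < 2 * Real.pi) := ⟨by positivity⟩

/-- The unit circle, realized as `ℝ / 2πℤ`. -/
abbrev 𝕋 : Type := AddCircle (2 * Real.pi)

/-- Normalized Haar (arc-length) measure on the circle. -/
abbrev μ : Measure 𝕋 := AddCircle.haarAddCircle

/-- The Hilbert space `L²(𝕋)`. -/
abbrev L2 : Type := Lp ℂ 2 μ

/-- The Hardy space `H²`: the closed span in `L²` of the Fourier monomials `e^{int}`, `n ≥ 0`. -/
def H2 : Submodule ℂ L2 :=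
  (span ℂ (Set.range fun n : ℕ => fourierLp 2 (n : ℤ))).topologicalClosure

instance : CompleteSpace H2 :=
  IsClosed.completeSpace_coe (hs := Submodule.isClosed_topologicalClosure _)

/-- A boundary function is inner iff it is unimodular a.e. and its `L²` class lies in `H²`. -/
def IsInner (w : 𝕋 → ℂ) : Prop :=
  ∃ hw : MemLp w 2 μ, hw.toLp w ∈ H2 ∧ ∀ᵐ x ∂μ, ‖w x‖ = 1

/-- `w` is a nonconstant function (up to null sets). -/
def Nonconst (w : 𝕋 → ℂ) : Prop := ¬ ∃ c : ℂ, w =ᵐ[μ] fun _ => c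

/-- `M` is the operator of multiplication by `φ` on `L²`. -/
def IsMul (φ : 𝕋 → ℂ) (M : L2 →L[ℂ] L2) : Prop :=
  ∀ f : L2, (M f : 𝕋 → ℂ) =ᵐ[μ] fun x => φ x * f x

/-- The subspace `u·H²` (where `Mu` is multiplication by `u`). -/
def uH2 (Mu : L2 →L[ℂ] L2) : Submodule ℂ L2 := H2.map (Mu : L2 →ₗ[ℂ] L2)

/-- The model space `K_u = H² ⊖ uH²`. -/
def Ku (Mu : L2 →L[ℂ] L2) : Submodule ℂ L2 := H2 ⊓ (uH2 Mu)ᗮ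

instance (Mu : L2 →L[ℂ] L2) : CompleteSpace (Ku Mu) :=
  IsClosed.completeSpace_coe (hs := by
    have : (↑(Ku Mu) : Set L2) = ↑H2 ∩ ↑(uH2 Mu)ᗮ := rfl
    rw [this]
    exact (Submodule.isClosed_topologicalClosure _).inter (Submodule.isClosed_orthogonal _))

/-- The dual truncated Toeplitz operator `D_φ = P_{K_u^⊥} M_φ |_{K_u^⊥}` as an operator
on `K_u^⊥`. -/
def Dphi (Mu Mphi : L2 →L[ℂ] L2) : ((Ku Mu)ᗮ : Submodule ℂ L2) →L[ℂ] ((Ku Mu)ᗮ : Submodule ℂ L2) :=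
  (orthogonalProjection (Ku Mu)ᗮ).comp (Mphi.comp (Ku Mu)ᗮ.subtypeL)

/-- The composition `P_{K_u^⊥} ∘ M_φ`, viewed as a map of `L²` (agreeing with `D_φ` on
`K_u^⊥`). -/
def DP (Mu Mphi : L2 →L[ℂ] L2) (v : L2) : L2 :=
  ↑(orthogonalProjection (Ku Mu)ᗮ (Mphi v))

/-- An operator is norm attaining if some nonzero vector realizes its operator norm. -/
def NormAttaining {E F : Type*} [NormedAddCommGroup E] [NormedAddCommGroup F]
    [NormedSpace ℂ E] [NormedSpace ℂ F] (T : E →L[ℂ] F) : Prop :=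
  ∃ x, x ≠ 0 ∧ ‖T x‖ = ‖T‖ * ‖x‖

open scoped InnerProductSpace

lemma fourier_mem_H2 (n : ℕ) : fourierLp 2 (n : ℤ) ∈ H2 :=
  le_topologicalClosure _ (subset_span ⟨n, rfl⟩)

lemma isClosed_H2 : IsClosed (H2 : Set L2) := Submodule.isClosed_topologicalClosure _

lemma inner_H2_zero {f : L2} (hf : f ∈ H2) {m : ℤ} (hm : m < 0) :
    ⟪(fourierLp 2 m : L2), f⟫_ℂ = 0 := by
  have hker : H2 ≤ LinearMap.ker ((innerSL ℂ (fourierLp 2 m : L2)) : L2 →ₗ[ℂ] ℂ) := by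
    apply topologicalClosure_minimal
    · rw [span_le]
      rintro _ ⟨n, rfl⟩
      simp only [SetLike.mem_coe, LinearMap.mem_ker, ContinuousLinearMap.coe_coe, innerSL_apply_apply]
      exact orthonormal_fourier.2 (by omega : m ≠ (n : ℤ))
    · exact ContinuousLinearMap.isClosed_ker (innerSL ℂ (fourierLp 2 m : L2))
  exact hker hf

lemma mem_H2_of_inner {f : L2} (h : ∀ m : ℤ, m < 0 → ⟪(fourierLp 2 m : L2), f⟫_ℂ = 0) :
    f ∈ H2 := by
  set g : L2 := f - ↑(orthogonalProjection H2 f) with hg_def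
  have hg : g ∈ H2ᗮ := H2.sub_starProjection_mem_orthogonal f
  have hzero : ∀ i : ℤ, ⟪(fourierLp 2 i : L2), g⟫_ℂ = 0 := by
    intro i
    rcases lt_or_ge i 0 with hi | hi
    · have h1 : ⟪(fourierLp 2 i : L2), (↑(orthogonalProjection H2 f) : L2)⟫_ℂ = 0 :=
        inner_H2_zero (SetLike.coe_mem _) hi
      rw [hg_def, inner_sub_right, h i hi, h1, sub_zero]
    · have : fourierLp 2 i ∈ H2 := by
        have := fourier_mem_H2 i.toNat
        rwa [Int.toNat_of_nonneg hi] at this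
      exact (Submodule.mem_orthogonal H2 g).mp hg _ this
  have hrepr : fourierBasis.repr g = 0 := by
    ext i
    rw [fourierBasis.repr_apply_apply g i]
    have := hzero i
    rw [← coe_fourierBasis] at this
    simpa using this
  have : g = 0 := by
    have := fourierBasis.repr.injective (by rw [hrepr, map_zero] : fourierBasis.repr g =
      fourierBasis.repr 0)
    exact this
  have : f = ↑(orthogonalProjection H2 f) := by
    rw [← sub_eq_zero]; exact this
  rw [this]; exact SetLike.coe_mem _

lemma mulop_mem_H2 {w : 𝕋 → ℂ} (hw : MemLp w 2 μ) (hwH : hw.toLp w ∈ H2)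
    {Mw : L2 →L[ℂ] L2} (hMw : IsMul w Mw) {f : L2} (hf : f ∈ H2) : Mw f ∈ H2 := by
  have hmono : ∀ n : ℕ, Mw (fourierLp 2 (n : ℤ)) ∈ H2 := by
    intro n
    apply mem_H2_of_inner
    intro m hm
    have key : ⟪(fourierLp 2 m : L2), Mw (fourierLp 2 (n : ℤ))⟫_ℂ
        = ⟪(fourierLp 2 (m - n) : L2), hw.toLp w⟫_ℂ := by
      rw [MeasureTheory.L2.inner_def, MeasureTheory.L2.inner_def]
      apply integral_congr_ae
      filter_upwards [hMw (fourierLp 2 (n : ℤ)), coeFn_fourierLp 2 (n : ℤ),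
        coeFn_fourierLp 2 m, coeFn_fourierLp 2 (m - n), hw.coeFn_toLp] with x h1 h2 h3 h4 h5
      simp only [RCLike.inner_apply, h1, h2, h3, h4, h5]
      have : (starRingEnd ℂ) (fourier (m - n) x) = (starRingEnd ℂ) (fourier m x) * fourier n x := by
        rw [← fourier_neg, ← fourier_neg, (by ring : -(m - n) = -m + n), fourier_add]
      rw [this]; ring
    rw [key]
    exact inner_H2_zero hwH (by omega)
  have hcl : H2 ≤ (H2.comap (Mw : L2 →ₗ[ℂ] L2)) := by
    apply topologicalClosure_minimal
    · rw [span_le]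
      rintro _ ⟨n, rfl⟩
      exact hmono n
    · exact isClosed_H2.preimage Mw.continuous
  exact hcl hf

lemma norm_one_of_unimodular (f : L2) (h : ∀ᵐ x ∂μ, ‖(f : 𝕋 → ℂ) x‖ = 1) : ‖f‖ = 1 := by
  rw [Lp.norm_def]
  have : eLpNorm (f : 𝕋 → ℂ) 2 μ = eLpNorm (fun _ : 𝕋 => (1 : ℂ)) 2 μ :=
    eLpNorm_congr_norm_ae (by filter_upwards [h] with x hx; simp [hx])
  rw [this, eLpNorm_const (1 : ℂ) (by norm_num) (IsProbabilityMeasure.ne_zero μ)]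
  simp

lemma unimod_conj_mul {z : ℂ} (h : ‖z‖ = 1) : (starRingEnd ℂ) z * z = 1 := by
  have := Complex.mul_conj z
  rw [Complex.normSq_eq_norm_sq, h] at this
  rw [mul_comm, this]; norm_num

/-- If `φ = ū ψ̄₊ χ₊` for inner `ψ₊, χ₊`, then `D_φ` attains its norm at a nonzero
analytic vector `u h₀` with `φ u h₀ ∈ H²`. -/
theorem stmt15 (u φ : 𝕋 → ℂ) (hu : IsInner u) (hnc : Nonconst u)
    (Mu Mφ : L2 →L[ℂ] L2) (hMu : IsMul u Mu) (hMφ : IsMul φ Mφ)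
    (hφ : eLpNorm φ ⊤ μ = 1)
    (ψ χ : 𝕋 → ℂ) (hψ : IsInner ψ) (hχ : IsInner χ)
    (hfact : φ =ᵐ[μ] fun x => star (u x) * star (ψ x) * χ x) :
    ∃ h₀ : L2, h₀ ∈ H2 ∧ Mu h₀ ≠ 0 ∧
      ‖DP Mu Mφ (Mu h₀)‖ = ‖Mu h₀‖ ∧ Mφ (Mu h₀) ∈ H2 := by
  obtain ⟨hu2, huH, huMod⟩ := hu
  obtain ⟨hψ2, hψH, hψMod⟩ := hψ
  obtain ⟨hχ2, hχH, hχMod⟩ := hχ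
  set ψL : L2 := hψ2.toLp ψ with hψL_def
  set χL : L2 := hχ2.toLp χ with hχL_def
  have hkey : Mφ (Mu (Mu ψL)) = Mu χL := by
    apply Lp.ext
    have hA : (Mu (Mu ψL) : 𝕋 → ℂ) =ᵐ[μ] fun x => u x * (Mu ψL : 𝕋 → ℂ) x := hMu (Mu ψL)
    have hB : (Mu ψL : 𝕋 → ℂ) =ᵐ[μ] fun x => u x * (ψL : 𝕋 → ℂ) x := hMu ψL
    filter_upwards [hMφ (Mu (Mu ψL)), hA, hB, hψ2.coeFn_toLp, hMu χL, hχ2.coeFn_toLp,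
      hfact, huMod, hψMod] with x h1 h2 h3 h4 h5 h6 h7 h8 h9
    rw [h1, h2, h3, h4, h5, h6, h7]
    have hu1 : (starRingEnd ℂ) (u x) * u x = 1 := unimod_conj_mul h8
    have hψ1 : (starRingEnd ℂ) (ψ x) * ψ x = 1 := unimod_conj_mul h9
    calc star (u x) * star (ψ x) * χ x * (u x * (u x * ψ x))
        = ((starRingEnd ℂ) (u x) * u x) * ((starRingEnd ℂ) (ψ x) * ψ x) * (u x * χ x) := by
          simp only [Complex.star_def]; ring
      _ = u x * χ x := by rw [hu1, hψ1]; ring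
  refine ⟨Mu ψL, mulop_mem_H2 hu2 huH hMu hψH, ?_, ?_, ?_⟩
  ·
    -- Mu (Mu ψL) ≠ 0
    intro h0
    have hA : (Mu (Mu ψL) : 𝕋 → ℂ) =ᵐ[μ] fun x => u x * (Mu ψL : 𝕋 → ℂ) x := hMu (Mu ψL)
    have hB : (Mu ψL : 𝕋 → ℂ) =ᵐ[μ] fun x => u x * (ψL : 𝕋 → ℂ) x := hMu ψL
    have hC : (ψL : 𝕋 → ℂ) =ᵐ[μ] ψ := hψ2.coeFn_toLp
    have hZ : (Mu (Mu ψL) : 𝕋 → ℂ) =ᵐ[μ] 0 := by rw [h0]; exact Lp.coeFn_zero ℂ 2 μ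
    have hFalse : ∀ᵐ x ∂μ, False := by
      filter_upwards [hA, hB, hC, hZ, huMod, hψMod] with x h1 h2 h3 h4 h5 h6
      have : u x * (u x * ψ x) = 0 := by
        rw [← h3, ← h2, ← h1, h4]; rfl
      have hn : ‖u x * (u x * ψ x)‖ = 1 := by
        rw [norm_mul, norm_mul, h5, h6]; ring
      rw [this] at hn; simp at hn
    have : (μ : Measure 𝕋) ≠ 0 := IsProbabilityMeasure.ne_zero μ
    haveI hne : (MeasureTheory.ae μ).NeBot := MeasureTheory.ae_neBot.mpr this
    exact (hFalse.exists).choose_spec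
  · -- norm equality
    have hmemuH2 : Mu χL ∈ uH2 Mu := ⟨χL, hχH, rfl⟩
    have hle : uH2 Mu ≤ (Ku Mu)ᗮ :=
      le_trans (Submodule.le_orthogonal_orthogonal _)
        (Submodule.orthogonal_le (inf_le_right : Ku Mu ≤ (uH2 Mu)ᗮ))
    have hproj : DP Mu Mφ (Mu (Mu ψL)) = Mu χL := by
      simp only [DP, hkey]
      exact starProjection_eq_self_iff.mpr (hle hmemuH2)
    rw [hproj]
    have hn1 : ‖Mu χL‖ = 1 := by
      apply norm_one_of_unimodular
      filter_upwards [hMu χL, hχ2.coeFn_toLp, huMod, hχMod] with x h1 h2 h3 h4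
      rw [h1, h2, norm_mul, h3, h4]; ring
    have hn2 : ‖Mu (Mu ψL)‖ = 1 := by
      apply norm_one_of_unimodular
      have hB : (Mu ψL : 𝕋 → ℂ) =ᵐ[μ] fun x => u x * (ψL : 𝕋 → ℂ) x := hMu ψL
      filter_upwards [hMu (Mu ψL), hB, hψ2.coeFn_toLp, huMod, hψMod] with x h1 h2 h3 h4 h5
      rw [h1, h2, h3, norm_mul, norm_mul, h4, h5]; ring
    rw [hn1, hn2]
  · rw [hkey]
    exact mulop_mem_H2 hu2 huH hMu hχH
end DTTO
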